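/- Fix ε > 0. Define a₀ = 1 and aₙ = ∏_{k=1}^{n} ((2k − √2)(2k + 1 − √2))/((2k)(2k − 2√2)) for n ≥ 1, and let f_α(t) = t^{−2+√2} · Σ_{n=0}^{∞} aₙ·(ε/t²)ⁿ. Then for every t ≥ 10√ε the series converges absolutely; f_α is twice differentiable on (10√ε, ∞) and satisfies (t² − ε)·f_α''(t) + 5t·f_α'(t) + 2·f_α(t) = 0 there; and (1/2)·t^{−2+√2} ≤ f_α(t) ≤ 2·t^{−2+√2} for all t ≥ 10√ε. -/

import Mathlib

noncomputable section

/-- The coefficients aₙ = ∏_{k=1}^{n} ((2k − √2)(2k + 1 − √2))/((2k)(2k − 2√2)),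
with a₀ = 1. -/
def aCoeff (n : ℕ) : ℝ :=
  ∏ k ∈ Finset.Icc 1 n,
    ((2 * (k:ℝ) - Real.sqrt 2) * (2 * (k:ℝ) + 1 - Real.sqrt 2)) /
      ((2 * (k:ℝ)) * (2 * (k:ℝ) - 2 * Real.sqrt 2))

/-- The homogeneous solution f_α(t) = t^{−2+√2}·Σ_{n=0}^∞ aₙ·(ε/t²)ⁿ. -/
def fAlpha (ε t : ℝ) : ℝ :=
  t ^ (-2 + Real.sqrt 2 : ℝ) * ∑' n : ℕ, aCoeff n * (ε / t ^ 2) ^ n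

namespace FAlphaAux

open Real Filter Set

lemma sqrt2_sq : Real.sqrt 2 ^ 2 = 2 := Real.sq_sqrt (by norm_num)

lemma sqrt2_gt : 1 < Real.sqrt 2 := by
  nlinarith [sqrt2_sq, Real.sqrt_nonneg 2]

lemma sqrt2_lt : Real.sqrt 2 < 3/2 := by
  nlinarith [sqrt2_sq, Real.sqrt_nonneg 2]

/-- The exponent. -/
def Rc : ℝ := -2 + Real.sqrt 2

lemma Rc_neg : Rc < 0 := by
  have := sqrt2_lt; unfold Rc; linarith

lemma Rc_gt : -1 < Rc := by
  have := sqrt2_gt; unfold Rc; linarith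

lemma aCoeff_zero : aCoeff 0 = 1 := by simp [aCoeff]

lemma aCoeff_succ (n : ℕ) :
    aCoeff (n+1) = aCoeff n *
      (((2 * ((n:ℝ)+1) - Real.sqrt 2) * (2 * ((n:ℝ)+1) + 1 - Real.sqrt 2)) /
        ((2 * ((n:ℝ)+1)) * (2 * ((n:ℝ)+1) - 2 * Real.sqrt 2))) := by
  unfold aCoeff
  rw [Finset.prod_Icc_succ_top (Nat.le_add_left 1 n)]
  push_cast
  ring

lemma den_ne (n : ℕ) : (2 * ((n:ℝ)+1)) * (2 * ((n:ℝ)+1) - 2 * Real.sqrt 2) ≠ 0 := by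
  have hn : (0:ℝ) ≤ (n:ℝ) := Nat.cast_nonneg n
  refine mul_ne_zero (by positivity) ?_
  intro h
  have hs : Real.sqrt 2 = (n:ℝ) + 1 := by linarith
  have h2 : ((n:ℝ)+1)^2 = 2 := by rw [← hs]; exact sqrt2_sq
  rcases Nat.eq_zero_or_pos n with h0 | h1
  · rw [h0] at h2; norm_num at h2
  · have : (1:ℝ) ≤ (n:ℝ) := by exact_mod_cast h1
    nlinarith

lemma aCoeff_rec (n : ℕ) :
    aCoeff (n+1) * ((2 * ((n:ℝ)+1)) * (2 * ((n:ℝ)+1) - 2 * Real.sqrt 2)) =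
      aCoeff n * ((2 * ((n:ℝ)+1) - Real.sqrt 2) * (2 * ((n:ℝ)+1) + 1 - Real.sqrt 2)) := by
  rw [aCoeff_succ]
  field_simp
  rw [mul_div_cancel_right₀ _ (by intro h; apply den_ne n; linear_combination (4 * ((n:ℝ)+1)) * h)]

lemma ratio_bound (n : ℕ) :
    |(((2 * ((n:ℝ)+1) - Real.sqrt 2) * (2 * ((n:ℝ)+1) + 1 - Real.sqrt 2)) /
        ((2 * ((n:ℝ)+1)) * (2 * ((n:ℝ)+1) - 2 * Real.sqrt 2)))| ≤ 4 := by
  have hs2 := sqrt2_sq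
  have hsg := sqrt2_gt
  have hsl := sqrt2_lt
  rcases Nat.eq_zero_or_pos n with h0 | h1
  · subst h0
    simp only [Nat.cast_zero, zero_add, mul_one]
    have hnum : (0:ℝ) ≤ (2 - Real.sqrt 2) * (2 + 1 - Real.sqrt 2) := by nlinarith
    have hden : (2:ℝ) * (2 - 2 * Real.sqrt 2) < (0:ℝ) := by nlinarith
    rw [abs_div, abs_of_nonneg hnum, abs_of_neg hden, div_le_iff₀ (by linarith)]
    nlinarith
  · have hn : (1:ℝ) ≤ (n:ℝ) := by exact_mod_cast h1
    have hden : (0:ℝ) < (2 * ((n:ℝ)+1)) * (2 * ((n:ℝ)+1) - 2 * Real.sqrt 2) := by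
      nlinarith
    have hnum : (0:ℝ) ≤ (2 * ((n:ℝ)+1) - Real.sqrt 2) * (2 * ((n:ℝ)+1) + 1 - Real.sqrt 2) := by
      nlinarith
    rw [abs_of_nonneg (div_nonneg hnum hden.le), div_le_iff₀ hden]
    rcases eq_or_lt_of_le hn with h2 | h2
    · rw [← h2]
      nlinarith
    · have h3 : (2:ℝ) ≤ (n:ℝ) := by
        have : (1:ℕ) < n := by exact_mod_cast h2
        exact_mod_cast this
      nlinarith [sq_nonneg ((n:ℝ) - 2)]

lemma aCoeff_abs (n : ℕ) : |aCoeff n| ≤ 4 ^ n := by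
  induction n with
  | zero => simp [aCoeff_zero]
  | succ n ih =>
    rw [aCoeff_succ, abs_mul, pow_succ]
    exact mul_le_mul ih (ratio_bound n) (abs_nonneg _) (by positivity)

lemma summable_quad_geo :
    Summable (fun n : ℕ => ((2*(n:ℝ)+3)^2) * (1/25:ℝ)^n) := by
  have hr : ‖(1/25 : ℝ)‖ < 1 := by
    rw [Real.norm_eq_abs, abs_of_nonneg (by norm_num : (0:ℝ) ≤ 1/25)]; norm_num
  have h0 : Summable (fun n : ℕ => ((n:ℝ))^0 * (1/25:ℝ)^n) :=
    summable_pow_mul_geometric_of_norm_lt_one 0 hr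
  have h1 : Summable (fun n : ℕ => ((n:ℝ))^1 * (1/25:ℝ)^n) :=
    summable_pow_mul_geometric_of_norm_lt_one 1 hr
  have h2 : Summable (fun n : ℕ => ((n:ℝ))^2 * (1/25:ℝ)^n) :=
    summable_pow_mul_geometric_of_norm_lt_one 2 hr
  have := (h2.mul_left 4).add ((h1.mul_left 12).add (h0.mul_left 9))
  exact this.congr (fun n => by push_cast; ring)

variable {ε t y : ℝ}

lemma T_pos (hε : 0 < ε) : 0 < 10 * Real.sqrt ε := by positivity

lemma T_sq (hε : 0 < ε) : (10 * Real.sqrt ε)^2 = 100 * ε := by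
  rw [mul_pow, Real.sq_sqrt hε.le]; norm_num

lemma summable_u (hε : 0 < ε) (σ : ℝ) :
    Summable (fun n : ℕ => (4:ℝ)^n * ε^n *
      ((2*(n:ℝ)+3)^2 * (10 * Real.sqrt ε) ^ (Rc - 2*(n:ℝ) + σ))) := by
  have hT0 := T_pos hε
  have hT2 := T_sq hε
  have key : ∀ n : ℕ, (10 * Real.sqrt ε) ^ (Rc + σ) * ((2*(n:ℝ)+3)^2 * (1/25:ℝ)^n) =
      (4:ℝ)^n * ε^n * ((2*(n:ℝ)+3)^2 * (10 * Real.sqrt ε) ^ (Rc - 2*(n:ℝ) + σ)) := by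
    intro n
    have e1 : (10 * Real.sqrt ε) ^ (Rc - 2*(n:ℝ) + σ) =
        (10 * Real.sqrt ε) ^ (Rc + σ) * (((10 * Real.sqrt ε)^2)⁻¹)^n := by
      rw [show Rc - 2*(n:ℝ) + σ = (Rc + σ) + (-(2*(n:ℝ))) by ring, Real.rpow_add hT0]
      congr 1
      rw [Real.rpow_neg hT0.le,
          show (2*(n:ℝ)) = ((2*n : ℕ):ℝ) by push_cast; ring,
          Real.rpow_natCast, pow_mul, inv_pow]
    rw [e1]
    have h25 : (4:ℝ)^n * ε^n * ((((10 * Real.sqrt ε)^2)⁻¹)^n) = (1/25:ℝ)^n := by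
      rw [← mul_pow, ← mul_pow, hT2]
      congr 1
      field_simp
      ring
    linear_combination (-((2*(n:ℝ)+3)^2 * (10 * Real.sqrt ε) ^ (Rc + σ))) * h25
  exact (summable_quad_geo.mul_left ((10 * Real.sqrt ε) ^ (Rc + σ))).congr key

lemma bound_aux (hε : 0 < ε) (ht : 10 * Real.sqrt ε ≤ t) {p e : ℝ} (n : ℕ)
    (hp : |p| ≤ (2*(n:ℝ)+3)^2) (he : e ≤ 0) :
    |aCoeff n * ε^n * (p * t ^ e)| ≤
      4^n * ε^n * ((2*(n:ℝ)+3)^2 * (10 * Real.sqrt ε) ^ e) := by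
  have hT0 := T_pos hε
  have ht0 : 0 < t := hT0.trans_le ht
  have hte : t ^ e ≤ (10 * Real.sqrt ε) ^ e :=
    Real.rpow_le_rpow_of_nonpos hT0 ht he
  have h1 : |aCoeff n * ε^n * (p * t^e)| = |aCoeff n| * ε^n * (|p| * t^e) := by
    rw [abs_mul, abs_mul, abs_mul, abs_of_nonneg ((Real.rpow_pos_of_pos ht0 e).le),
        abs_of_nonneg (pow_nonneg hε.le n)]
  rw [h1]
  have h2 := aCoeff_abs n
  have h3 : (0:ℝ) ≤ t ^ e := (Real.rpow_pos_of_pos ht0 e).le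
  gcongr

/-- Terms of the series written with real powers. -/
def vv (ε : ℝ) (n : ℕ) (t : ℝ) : ℝ := aCoeff n * ε^n * t ^ (Rc - 2*(n:ℝ))

def vv1 (ε : ℝ) (n : ℕ) (t : ℝ) : ℝ :=
  aCoeff n * ε^n * ((Rc - 2*(n:ℝ)) * t ^ (Rc - 2*(n:ℝ) - 1))

def vv2 (ε : ℝ) (n : ℕ) (t : ℝ) : ℝ :=
  aCoeff n * ε^n * ((Rc - 2*(n:ℝ)) * ((Rc - 2*(n:ℝ) - 1) * t ^ (Rc - 2*(n:ℝ) - 1 - 1)))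

lemma e_nonpos0 (n : ℕ) : Rc - 2*(n:ℝ) ≤ 0 := by
  have := Rc_neg; have : (0:ℝ) ≤ (n:ℝ) := Nat.cast_nonneg n
  nlinarith [Rc_neg]

lemma e_nonpos1 (n : ℕ) : Rc - 2*(n:ℝ) - 1 ≤ 0 := by linarith [e_nonpos0 n]

lemma e_nonpos2 (n : ℕ) : Rc - 2*(n:ℝ) - 1 - 1 ≤ 0 := by linarith [e_nonpos0 n]

lemma p0_abs (n : ℕ) : |(1:ℝ)| ≤ (2*(n:ℝ)+3)^2 := by
  have : (0:ℝ) ≤ (n:ℝ) := Nat.cast_nonneg n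
  rw [abs_one]; nlinarith

lemma p1_abs (n : ℕ) : |Rc - 2*(n:ℝ)| ≤ (2*(n:ℝ)+3)^2 := by
  have h1 := Rc_neg; have h2 := Rc_gt
  have : (0:ℝ) ≤ (n:ℝ) := Nat.cast_nonneg n
  rw [abs_le]; constructor <;> nlinarith

lemma p2_abs (n : ℕ) : |(Rc - 2*(n:ℝ)) * (Rc - 2*(n:ℝ) - 1)| ≤ (2*(n:ℝ)+3)^2 := by
  have h1 := Rc_neg; have h2 := Rc_gt
  have hn : (0:ℝ) ≤ (n:ℝ) := Nat.cast_nonneg n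
  rw [abs_mul]
  have e1 : |Rc - 2*(n:ℝ)| ≤ 2*(n:ℝ)+1 := by rw [abs_le]; constructor <;> nlinarith
  have e2 : |Rc - 2*(n:ℝ) - 1| ≤ 2*(n:ℝ)+2 := by rw [abs_le]; constructor <;> nlinarith
  nlinarith [abs_nonneg (Rc - 2*(n:ℝ)), abs_nonneg (Rc - 2*(n:ℝ) - 1)]

lemma vv_bound (hε : 0 < ε) (ht : 10 * Real.sqrt ε ≤ t) (n : ℕ) :
    |vv ε n t| ≤ 4^n * ε^n * ((2*(n:ℝ)+3)^2 * (10 * Real.sqrt ε) ^ (Rc - 2*(n:ℝ))) := by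
  rw [show vv ε n t = aCoeff n * ε^n * ((1:ℝ) * t ^ (Rc - 2*(n:ℝ))) by unfold vv; ring]
  exact bound_aux hε ht n (p0_abs n) (e_nonpos0 n)

lemma vv1_bound (hε : 0 < ε) (ht : 10 * Real.sqrt ε ≤ t) (n : ℕ) :
    |vv1 ε n t| ≤ 4^n * ε^n * ((2*(n:ℝ)+3)^2 * (10 * Real.sqrt ε) ^ (Rc - 2*(n:ℝ) - 1)) :=
  bound_aux hε ht n (p1_abs n) (e_nonpos1 n)

lemma vv2_bound (hε : 0 < ε) (ht : 10 * Real.sqrt ε ≤ t) (n : ℕ) :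
    |vv2 ε n t| ≤ 4^n * ε^n * ((2*(n:ℝ)+3)^2 * (10 * Real.sqrt ε) ^ (Rc - 2*(n:ℝ) - 1 - 1)) := by
  rw [show vv2 ε n t = aCoeff n * ε^n *
      (((Rc - 2*(n:ℝ)) * (Rc - 2*(n:ℝ) - 1)) * t ^ (Rc - 2*(n:ℝ) - 1 - 1)) by
        unfold vv2; ring]
  exact bound_aux hε ht n (p2_abs n) (e_nonpos2 n)

lemma summable_u0 (hε : 0 < ε) :
    Summable (fun n : ℕ => (4:ℝ)^n * ε^n *
      ((2*(n:ℝ)+3)^2 * (10 * Real.sqrt ε) ^ (Rc - 2*(n:ℝ)))) :=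
  (summable_u hε 0).congr (fun n => by norm_num)

lemma summable_u1 (hε : 0 < ε) :
    Summable (fun n : ℕ => (4:ℝ)^n * ε^n *
      ((2*(n:ℝ)+3)^2 * (10 * Real.sqrt ε) ^ (Rc - 2*(n:ℝ) - 1))) :=
  (summable_u hε (-1)).congr (fun n => by
    rw [show Rc - 2*(n:ℝ) + (-1) = Rc - 2*(n:ℝ) - 1 by ring])

lemma summable_u2 (hε : 0 < ε) :
    Summable (fun n : ℕ => (4:ℝ)^n * ε^n *
      ((2*(n:ℝ)+3)^2 * (10 * Real.sqrt ε) ^ (Rc - 2*(n:ℝ) - 1 - 1))) :=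
  (summable_u hε (-2)).congr (fun n => by
    rw [show Rc - 2*(n:ℝ) + (-2) = Rc - 2*(n:ℝ) - 1 - 1 by ring])

lemma summable_vv (hε : 0 < ε) (ht : 10 * Real.sqrt ε ≤ t) :
    Summable (fun n => vv ε n t) :=
  Summable.of_abs (Summable.of_nonneg_of_le (fun n => abs_nonneg _)
    (fun n => vv_bound hε ht n) (summable_u0 hε))

lemma summable_vv1 (hε : 0 < ε) (ht : 10 * Real.sqrt ε ≤ t) :
    Summable (fun n => vv1 ε n t) :=
  Summable.of_abs (Summable.of_nonneg_of_le (fun n => abs_nonneg _)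
    (fun n => vv1_bound hε ht n) (summable_u1 hε))

lemma summable_vv2 (hε : 0 < ε) (ht : 10 * Real.sqrt ε ≤ t) :
    Summable (fun n => vv2 ε n t) :=
  Summable.of_abs (Summable.of_nonneg_of_le (fun n => abs_nonneg _)
    (fun n => vv2_bound hε ht n) (summable_u2 hε))

lemma hasDerivAt_vv (n : ℕ) (hy : 0 < y) : HasDerivAt (vv ε n) (vv1 ε n y) y :=
  (Real.hasDerivAt_rpow_const (p := Rc - 2*(n:ℝ)) (Or.inl hy.ne')).const_mul
    (aCoeff n * ε^n)

lemma hasDerivAt_vv1 (n : ℕ) (hy : 0 < y) : HasDerivAt (vv1 ε n) (vv2 ε n y) y :=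
  (((Real.hasDerivAt_rpow_const (p := Rc - 2*(n:ℝ) - 1) (Or.inl hy.ne'))).const_mul
    (Rc - 2*(n:ℝ))).const_mul (aCoeff n * ε^n)

lemma hasDerivAt_sum1 (hε : 0 < ε) (hy : y ∈ Set.Ioi (10 * Real.sqrt ε)) :
    HasDerivAt (fun z => ∑' n, vv ε n z) (∑' n, vv1 ε n y) y := by
  refine hasDerivAt_tsum_of_isPreconnected (summable_u1 hε) isOpen_Ioi
    (isPreconnected_Ioi) (fun n z hz => hasDerivAt_vv n ((T_pos hε).trans hz))
    (fun n z hz => ?_) hy (summable_vv hε (le_of_lt hy)) hy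
  exact vv1_bound hε (le_of_lt hz) n

lemma hasDerivAt_sum2 (hε : 0 < ε) (hy : y ∈ Set.Ioi (10 * Real.sqrt ε)) :
    HasDerivAt (fun z => ∑' n, vv1 ε n z) (∑' n, vv2 ε n y) y := by
  refine hasDerivAt_tsum_of_isPreconnected (summable_u2 hε) isOpen_Ioi
    (isPreconnected_Ioi) (fun n z hz => hasDerivAt_vv1 n ((T_pos hε).trans hz))
    (fun n z hz => ?_) hy (summable_vv1 hε (le_of_lt hy)) hy
  exact vv2_bound hε (le_of_lt hz) n

lemma fAlpha_eq_tsum (ht : 0 < t) : fAlpha ε t = ∑' n, vv ε n t := by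
  unfold fAlpha vv
  rw [← tsum_mul_left]
  refine tsum_congr fun n => ?_
  have hp : t ^ (Rc - 2*(n:ℝ)) = t ^ (-2 + Real.sqrt 2 : ℝ) / t^(2*n) := by
    rw [show Rc - 2*(n:ℝ) = (-2 + Real.sqrt 2) - ((2*n : ℕ):ℝ) by
        unfold Rc; push_cast; ring,
      Real.rpow_sub ht, Real.rpow_natCast]
  rw [hp, div_pow, ← pow_mul]
  have hne : t^(2*n) ≠ 0 := pow_ne_zero _ ht.ne'
  field_simp

lemma ode_term (ht : 0 < t) (n : ℕ) :
    t^2 * vv2 ε n t + 5*t*vv1 ε n t + 2*vv ε n t =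
      aCoeff n * ε^n * ((2*(n:ℝ)) * (2*(n:ℝ) - 2*Real.sqrt 2) * t ^ (Rc - 2*(n:ℝ))) := by
  unfold vv vv1 vv2
  have e1 : t ^ (Rc - 2*(n:ℝ) - 1) = t * t ^ (Rc - 2*(n:ℝ) - 1 - 1) := by
    have h := Real.rpow_add ht 1 (Rc - 2*(n:ℝ) - 1 - 1)
    rw [Real.rpow_one] at h
    rw [show (1:ℝ) + (Rc - 2*(n:ℝ) - 1 - 1) = Rc - 2*(n:ℝ) - 1 by ring] at h
    exact h
  have e0 : t ^ (Rc - 2*(n:ℝ)) = t * (t * t ^ (Rc - 2*(n:ℝ) - 1 - 1)) := by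
    have h := Real.rpow_add ht 1 (Rc - 2*(n:ℝ) - 1)
    rw [Real.rpow_one, e1] at h
    rw [show (1:ℝ) + (Rc - 2*(n:ℝ) - 1) = Rc - 2*(n:ℝ) by ring] at h
    exact h
  rw [e0, e1]
  set P := t ^ (Rc - 2*(n:ℝ) - 1 - 1) with hP
  rw [show Rc = -2 + Real.sqrt 2 from rfl]
  linear_combination (aCoeff n * ε^n * (t * (t * P))) * sqrt2_sq

lemma ode_sum (hε : 0 < ε) (ht : 10 * Real.sqrt ε ≤ t) :
    (t^2 - ε) * ∑' n, vv2 ε n t + 5*t*∑' n, vv1 ε n t + 2*∑' n, vv ε n t = 0 := by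
  have ht0 : 0 < t := (T_pos hε).trans_le ht
  have h0 := summable_vv hε ht
  have h1 := summable_vv1 hε ht
  have h2 := summable_vv2 hε ht
  set W : ℕ → ℝ := fun n => t^2 * vv2 ε n t + (5*t*vv1 ε n t + 2*vv ε n t) with hWdef
  have hW : Summable W :=
    (h2.mul_left (t^2)).add ((h1.mul_left (5*t)).add (h0.mul_left 2))
  have hWsum : ∑' n, W n = t^2 * (∑' n, vv2 ε n t) +
      (5*t*(∑' n, vv1 ε n t) + 2*(∑' n, vv ε n t)) := by
    rw [hWdef, Summable.tsum_add (h2.mul_left (t^2)) ((h1.mul_left (5*t)).add (h0.mul_left 2)),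
      Summable.tsum_add (h1.mul_left (5*t)) (h0.mul_left 2), tsum_mul_left, tsum_mul_left,
      tsum_mul_left]
  have hW0 : W 0 = 0 := by
    have := ode_term (ε := ε) ht0 0
    simp only [hWdef]
    rw [show t^2 * vv2 ε 0 t + (5*t*vv1 ε 0 t + 2*vv ε 0 t) =
        t^2 * vv2 ε 0 t + 5*t*vv1 ε 0 t + 2*vv ε 0 t by ring, this]
    norm_num
  have hWsucc : ∀ n : ℕ, W (n+1) = ε * vv2 ε n t := by
    intro n
    have hot := ode_term (ε := ε) ht0 (n+1)
    simp only [hWdef]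
    rw [show t^2 * vv2 ε (n+1) t + (5*t*vv1 ε (n+1) t + 2*vv ε (n+1) t) =
        t^2 * vv2 ε (n+1) t + 5*t*vv1 ε (n+1) t + 2*vv ε (n+1) t by ring, hot]
    unfold vv2
    rw [show Rc - 2*((n+1:ℕ):ℝ) = Rc - 2*(n:ℝ) - 1 - 1 by push_cast; ring]
    set P := t ^ (Rc - 2*(n:ℝ) - 1 - 1) with hP
    have hrec := aCoeff_rec n
    rw [show Rc = -2 + Real.sqrt 2 from rfl]
    push_cast
    linear_combination (ε^(n+1) * P) * hrec
  have hWs : ∑' n, W n = ε * ∑' n, vv2 ε n t := by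
    rw [Summable.tsum_eq_zero_add hW, hW0, zero_add]
    rw [tsum_congr hWsucc, tsum_mul_left]
  have := hWsum.symm.trans hWs
  linarith [this]

lemma fAlpha_eventually (hε : 0 < ε) (ht : t ∈ Set.Ioi (10 * Real.sqrt ε)) :
    fAlpha ε =ᶠ[nhds t] (fun z => ∑' n, vv ε n z) := by
  filter_upwards [isOpen_Ioi.mem_nhds ht] with z hz
  exact fAlpha_eq_tsum ((T_pos hε).trans hz)

lemma deriv_fAlpha (hε : 0 < ε) (ht : t ∈ Set.Ioi (10 * Real.sqrt ε)) :
    HasDerivAt (fAlpha ε) (∑' n, vv1 ε n t) t :=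
  (hasDerivAt_sum1 hε ht).congr_of_eventuallyEq (fAlpha_eventually hε ht)

lemma deriv_fAlpha_eventually (hε : 0 < ε) (ht : t ∈ Set.Ioi (10 * Real.sqrt ε)) :
    deriv (fAlpha ε) =ᶠ[nhds t] (fun z => ∑' n, vv1 ε n z) := by
  filter_upwards [isOpen_Ioi.mem_nhds ht] with z hz
  exact (deriv_fAlpha hε hz).deriv

lemma deriv2_fAlpha (hε : 0 < ε) (ht : t ∈ Set.Ioi (10 * Real.sqrt ε)) :
    HasDerivAt (deriv (fAlpha ε)) (∑' n, vv2 ε n t) t :=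
  (hasDerivAt_sum2 hε ht).congr_of_eventuallyEq (deriv_fAlpha_eventually hε ht)

lemma t_sq_ge (hε : 0 < ε) (ht : 10 * Real.sqrt ε ≤ t) : 100 * ε ≤ t^2 := by
  have h1 := Real.sq_sqrt hε.le
  have h2 := Real.sqrt_nonneg ε
  nlinarith

lemma x_bounds (hε : 0 < ε) (ht : 10 * Real.sqrt ε ≤ t) :
    0 < ε / t^2 ∧ ε / t^2 ≤ 1/100 := by
  have ht0 : 0 < t := (T_pos hε).trans_le ht
  have ht2 : 0 < t^2 := by positivity
  constructor
  · positivity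
  · rw [div_le_iff₀ ht2]
    nlinarith [t_sq_ge hε ht]

lemma term_bound (hε : 0 < ε) (ht : 10 * Real.sqrt ε ≤ t) (n : ℕ) :
    |aCoeff n * (ε / t^2)^n| ≤ (1/25:ℝ)^n := by
  obtain ⟨hx0, hx1⟩ := x_bounds hε ht
  rw [abs_mul, abs_pow, abs_of_nonneg hx0.le]
  calc |aCoeff n| * (ε / t^2)^n ≤ 4^n * (ε / t^2)^n := by
        gcongr; exact aCoeff_abs n
    _ = (4 * (ε / t^2))^n := by rw [mul_pow]
    _ ≤ (1/25:ℝ)^n := by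
        have h4 : 4 * (ε/t^2) ≤ 1/25 := by linarith
        exact pow_le_pow_left₀ (by positivity) h4 n

lemma summable_abs_x (hε : 0 < ε) (ht : 10 * Real.sqrt ε ≤ t) :
    Summable (fun n : ℕ => |aCoeff n * (ε / t ^ 2) ^ n|) :=
  Summable.of_nonneg_of_le (fun n => abs_nonneg _) (fun n => term_bound hε ht n)
    (summable_geometric_of_lt_one (by norm_num) (by norm_num))

set_option maxHeartbeats 1000000 in
lemma series_bounds (hε : 0 < ε) (ht : 10 * Real.sqrt ε ≤ t) :
    1/2 ≤ (∑' n : ℕ, aCoeff n * (ε / t ^ 2) ^ n) ∧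
      (∑' n : ℕ, aCoeff n * (ε / t ^ 2) ^ n) ≤ 2 := by
  have habs := summable_abs_x hε ht
  have hsum : Summable (fun n : ℕ => aCoeff n * (ε / t ^ 2) ^ n) := habs.of_abs
  have hsum1 : Summable (fun n : ℕ => aCoeff (n+1) * (ε / t ^ 2) ^ (n+1)) :=
    (summable_nat_add_iff 1).2 hsum
  have hS : (∑' n : ℕ, aCoeff n * (ε / t ^ 2) ^ n) =
      1 + ∑' n : ℕ, aCoeff (n+1) * (ε / t ^ 2) ^ (n+1) := by
    rw [Summable.tsum_eq_zero_add hsum, aCoeff_zero]; norm_num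
  have hgeo : Summable (fun n : ℕ => (1/25:ℝ)^(n+1)) :=
    (summable_nat_add_iff 1).2 (summable_geometric_of_lt_one (by norm_num) (by norm_num))
  have habs' : Summable (fun n : ℕ => |aCoeff (n+1) * (ε / t ^ 2) ^ (n+1)|) :=
    (summable_nat_add_iff 1).2 habs
  have habs1 : |∑' n : ℕ, aCoeff (n+1) * (ε / t ^ 2) ^ (n+1)| ≤
      ∑' n : ℕ, (1/25:ℝ)^(n+1) := by
    calc |∑' n : ℕ, aCoeff (n+1) * (ε / t ^ 2) ^ (n+1)|
        ≤ ∑' n : ℕ, |aCoeff (n+1) * (ε / t ^ 2) ^ (n+1)| := by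
          have h := norm_tsum_le_tsum_norm
            (f := fun n : ℕ => aCoeff (n+1) * (ε / t ^ 2) ^ (n+1)) (by
              simpa only [Real.norm_eq_abs] using habs')
          simpa only [Real.norm_eq_abs] using h
      _ ≤ ∑' n : ℕ, (1/25:ℝ)^(n+1) :=
          Summable.tsum_le_tsum (fun n => term_bound hε ht (n+1)) habs' hgeo
  have hgval : (∑' n : ℕ, (1/25:ℝ)^(n+1)) = 1/24 := by
    have h1 : (∑' n : ℕ, (1/25:ℝ)^n) = (1 - 1/25)⁻¹ :=
      tsum_geometric_of_lt_one (by norm_num) (by norm_num)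
    calc (∑' n : ℕ, (1/25:ℝ)^(n+1)) = ∑' n : ℕ, (1/25:ℝ)^n * (1/25) := by
          refine tsum_congr fun n => ?_; rw [pow_succ]
      _ = (∑' n : ℕ, (1/25:ℝ)^n) * (1/25) := tsum_mul_right
      _ = 1/24 := by rw [h1]; norm_num
  rw [hgval] at habs1
  rw [abs_le] at habs1
  constructor
  · rw [hS]; linarith [habs1.1]
  · rw [hS]; linarith [habs1.2]

end FAlphaAux

open FAlphaAux in
/-- The series defining f_α converges absolutely for t ≥ 10√ε, f_α solves the
ODE (t² − ε)y'' + 5t·y' + 2y = 0 on (10√ε, ∞), and f_α(t) is comparable to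
t^{−2+√2} there. -/
theorem fAlpha_properties (ε : ℝ) (hε : 0 < ε) :
    (∀ t : ℝ, 10 * Real.sqrt ε ≤ t →
      Summable (fun n : ℕ => |aCoeff n * (ε / t ^ 2) ^ n|)) ∧
    (∀ t : ℝ, 10 * Real.sqrt ε < t →
      DifferentiableAt ℝ (fAlpha ε) t ∧
      DifferentiableAt ℝ (deriv (fAlpha ε)) t ∧
      (t ^ 2 - ε) * deriv (deriv (fAlpha ε)) t + 5 * t * deriv (fAlpha ε) t
        + 2 * fAlpha ε t = 0) ∧
    (∀ t : ℝ, 10 * Real.sqrt ε ≤ t →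
      (1/2) * t ^ (-2 + Real.sqrt 2 : ℝ) ≤ fAlpha ε t ∧
      fAlpha ε t ≤ 2 * t ^ (-2 + Real.sqrt 2 : ℝ)) := by
  refine ⟨fun t ht => summable_abs_x hε ht, fun t ht => ?_, fun t ht => ?_⟩
  · have htm : t ∈ Set.Ioi (10 * Real.sqrt ε) := ht
    have hd1 := deriv_fAlpha hε htm
    have hd2 := deriv2_fAlpha hε htm
    refine ⟨hd1.differentiableAt, hd2.differentiableAt, ?_⟩
    rw [hd2.deriv, hd1.deriv, fAlpha_eq_tsum ((T_pos hε).trans htm)]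
    have := ode_sum hε (le_of_lt ht)
    linarith [this]
  · have ht0 : 0 < t := (T_pos hε).trans_le ht
    have hpos : 0 < t ^ (-2 + Real.sqrt 2 : ℝ) := Real.rpow_pos_of_pos ht0 _
    obtain ⟨hl, hu⟩ := series_bounds hε ht
    unfold fAlpha
    constructor
    · nlinarith
    · nlinarith
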